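/- arXiv:1811.02876 — 4 statements merged into one kernel-verified Lean document; each statement's English description precedes it below -/
import Mathlib

section
/- Let v ∈ Γ be primitive and suppose that ℤh² + ℤv is not saturated in Γ̄, i.e. there exist x ∈ Γ̄ and a nonzero integer n with n·x ∈ ℤh² + ℤv but x ∉ ℤh² + ℤv. Then (v.w) ≡ 0 (mod 3) for all w ∈ Γ. -/
open scoped BigOperators

noncomputable section

/-- The negative definite `E₈` Gram matrix. -/
def E8M : Matrix (Fin 8) (Fin 8) ℤ := - CartanMatrix.E₈

/-- The Gram matrix of the cubic lattice `Γ̄ = E₈(-1)² ⊕ U² ⊕ I₀,₃` on `ℤ²³`. -/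
def gramC : Fin 23 → Fin 23 → ℤ := fun i j =>
  if i.val < 8 ∧ j.val < 8 then
    E8M ⟨i.val % 8, Nat.mod_lt _ (by norm_num)⟩ ⟨j.val % 8, Nat.mod_lt _ (by norm_num)⟩
  else if 8 ≤ i.val ∧ i.val < 16 ∧ 8 ≤ j.val ∧ j.val < 16 then
    E8M ⟨(i.val - 8) % 8, Nat.mod_lt _ (by norm_num)⟩ ⟨(j.val - 8) % 8, Nat.mod_lt _ (by norm_num)⟩
  else if (i.val = 16 ∧ j.val = 17) ∨ (i.val = 17 ∧ j.val = 16) ∨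
      (i.val = 18 ∧ j.val = 19) ∨ (i.val = 19 ∧ j.val = 18) then 1
  else if 20 ≤ i.val ∧ i = j then -1
  else 0

/-- The bilinear form of the cubic lattice `Γ̄`. -/
def GB (x y : Fin 23 → ℤ) : ℤ := ∑ i, ∑ j, gramC i j * x i * y j

/-- The class `h² = (0,…,0,1,1,1)`. -/
def h2 : Fin 23 → ℤ := Pi.single 20 1 + Pi.single 21 1 + Pi.single 22 1

/-- A vector is primitive if it is not `m • w` with `|m| ≥ 2`. -/
def PrimitiveC (v : Fin 23 → ℤ) : Prop :=
  ¬ ∃ (m : ℤ) (w : Fin 23 → ℤ), 2 ≤ |m| ∧ v = m • w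

/-- Membership in `Γ = (h²)^⊥ ⊂ Γ̄`. -/
def inGamma (x : Fin 23 → ℤ) : Prop := GB h2 x = 0

lemma GB_add_right (x y z : Fin 23 → ℤ) : GB x (y + z) = GB x y + GB x z := by
  simp [GB, Pi.add_apply, mul_add, Finset.sum_add_distrib]

lemma GB_smul_right (c : ℤ) (x y : Fin 23 → ℤ) : GB x (c • y) = c * GB x y := by
  simp only [GB, Finset.mul_sum]
  refine Finset.sum_congr rfl fun i _ => Finset.sum_congr rfl fun j _ => ?_
  simp only [Pi.smul_apply, smul_eq_mul]; ring

/-- `Γ = (h²)^⊥` as a submodule of `ℤ²³`. -/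
def Gamma : Submodule ℤ (Fin 23 → ℤ) where
  carrier := {x | GB h2 x = 0}
  add_mem' := by
    intro a b ha hb
    simp only [Set.mem_setOf_eq] at *
    rw [GB_add_right, ha, hb, add_zero]
  zero_mem' := by simp [GB]
  smul_mem' := by
    intro c x hx
    simp only [Set.mem_setOf_eq] at *
    rw [GB_smul_right, hx, mul_zero]

/-- The saturation of a submodule. -/
def sat {R M : Type*} [CommRing R] [IsDomain R] [AddCommGroup M] [Module R M] (N : Submodule R M) :
    Submodule R M where
  carrier := {x | ∃ n : R, n ≠ 0 ∧ n • x ∈ N}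
  add_mem' := by
    rintro x y ⟨n, hn, hx⟩ ⟨m, hm, hy⟩
    refine ⟨n * m, mul_ne_zero hn hm, ?_⟩
    have h1 : (n * m) • (x + y) = m • (n • x) + n • (m • y) := by
      rw [smul_add, mul_comm n m, mul_smul, mul_smul, smul_comm m n y]
    rw [h1]
    exact N.add_mem (N.smul_mem m hx) (N.smul_mem n hy)
  zero_mem' := ⟨1, one_ne_zero, by simp⟩
  smul_mem' := by
    rintro c x ⟨n, hn, hx⟩
    exact ⟨n, hn, by rw [smul_comm]; exact N.smul_mem c hx⟩

/-- The saturation `K_v` of `ℤh² + ℤv` in `Γ̄`. -/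
def Kv (v : Fin 23 → ℤ) : Submodule ℤ (Fin 23 → ℤ) :=
  sat (Submodule.span ℤ ({h2, v} : Set (Fin 23 → ℤ)))

/-- `d` is the discriminant of `K_v`: some ℤ-basis of `K_v` has Gram determinant `d`. -/
def discIs (v : Fin 23 → ℤ) (d : ℤ) : Prop :=
  ∃ x y : Fin 23 → ℤ, Kv v = Submodule.span ℤ ({x, y} : Set (Fin 23 → ℤ)) ∧
    d = GB x x * GB y y - GB x y * GB y x

/-- The index of `ℤh² + ℤv` in its saturation `K_v`. -/
def idx (v : Fin 23 → ℤ) : ℕ :=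
  (Submodule.span ℤ ({h2, v} : Set (Fin 23 → ℤ))).toAddSubgroup.relIndex
    (Kv v).toAddSubgroup

/-- Isometries of the cubic lattice `Γ̄`. -/
def IsIsomC (g : (Fin 23 → ℤ) ≃ₗ[ℤ] (Fin 23 → ℤ)) : Prop := ∀ x y, GB (g x) (g y) = GB x y

end
def NInv : Matrix (Fin 23) (Fin 23) ℤ :=
  !![-4, -5, -7, -10, -8, -6, -4, -2, 0, 0, 0, 0, 0, 0, 0, 0, 0, 0, 0, 0, 0, 0, 0;
    -5, -8, -10, -15, -12, -9, -6, -3, 0, 0, 0, 0, 0, 0, 0, 0, 0, 0, 0, 0, 0, 0, 0;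
    -7, -10, -14, -20, -16, -12, -8, -4, 0, 0, 0, 0, 0, 0, 0, 0, 0, 0, 0, 0, 0, 0, 0;
    -10, -15, -20, -30, -24, -18, -12, -6, 0, 0, 0, 0, 0, 0, 0, 0, 0, 0, 0, 0, 0, 0, 0;
    -8, -12, -16, -24, -20, -15, -10, -5, 0, 0, 0, 0, 0, 0, 0, 0, 0, 0, 0, 0, 0, 0, 0;
    -6, -9, -12, -18, -15, -12, -8, -4, 0, 0, 0, 0, 0, 0, 0, 0, 0, 0, 0, 0, 0, 0, 0;
    -4, -6, -8, -12, -10, -8, -6, -3, 0, 0, 0, 0, 0, 0, 0, 0, 0, 0, 0, 0, 0, 0, 0;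
    -2, -3, -4, -6, -5, -4, -3, -2, 0, 0, 0, 0, 0, 0, 0, 0, 0, 0, 0, 0, 0, 0, 0;
    0, 0, 0, 0, 0, 0, 0, 0, -4, -5, -7, -10, -8, -6, -4, -2, 0, 0, 0, 0, 0, 0, 0;
    0, 0, 0, 0, 0, 0, 0, 0, -5, -8, -10, -15, -12, -9, -6, -3, 0, 0, 0, 0, 0, 0, 0;
    0, 0, 0, 0, 0, 0, 0, 0, -7, -10, -14, -20, -16, -12, -8, -4, 0, 0, 0, 0, 0, 0, 0;
    0, 0, 0, 0, 0, 0, 0, 0, -10, -15, -20, -30, -24, -18, -12, -6, 0, 0, 0, 0, 0, 0, 0;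
    0, 0, 0, 0, 0, 0, 0, 0, -8, -12, -16, -24, -20, -15, -10, -5, 0, 0, 0, 0, 0, 0, 0;
    0, 0, 0, 0, 0, 0, 0, 0, -6, -9, -12, -18, -15, -12, -8, -4, 0, 0, 0, 0, 0, 0, 0;
    0, 0, 0, 0, 0, 0, 0, 0, -4, -6, -8, -12, -10, -8, -6, -3, 0, 0, 0, 0, 0, 0, 0;
    0, 0, 0, 0, 0, 0, 0, 0, -2, -3, -4, -6, -5, -4, -3, -2, 0, 0, 0, 0, 0, 0, 0;
    0, 0, 0, 0, 0, 0, 0, 0, 0, 0, 0, 0, 0, 0, 0, 0, 0, 1, 0, 0, 0, 0, 0;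
    0, 0, 0, 0, 0, 0, 0, 0, 0, 0, 0, 0, 0, 0, 0, 0, 1, 0, 0, 0, 0, 0, 0;
    0, 0, 0, 0, 0, 0, 0, 0, 0, 0, 0, 0, 0, 0, 0, 0, 0, 0, 0, 1, 0, 0, 0;
    0, 0, 0, 0, 0, 0, 0, 0, 0, 0, 0, 0, 0, 0, 0, 0, 0, 0, 1, 0, 0, 0, 0;
    0, 0, 0, 0, 0, 0, 0, 0, 0, 0, 0, 0, 0, 0, 0, 0, 0, 0, 0, 0, -1, 0, 0;
    0, 0, 0, 0, 0, 0, 0, 0, 0, 0, 0, 0, 0, 0, 0, 0, 0, 0, 0, 0, 0, -1, 0;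
    0, 0, 0, 0, 0, 0, 0, 0, 0, 0, 0, 0, 0, 0, 0, 0, 0, 0, 0, 0, 0, 0, -1]


lemma myGram_symm : ∀ i j, gramC i j = gramC j i := by decide

lemma myGB_symm (x y : Fin 23 → ℤ) : GB x y = GB y x := by
  simp only [GB]
  rw [Finset.sum_comm]
  exact Finset.sum_congr rfl fun i _ => Finset.sum_congr rfl fun j _ => by
    rw [myGram_symm]; ring

lemma myGB_hh : GB h2 h2 = -3 := by decide

lemma h2_20 : h2 20 = 1 := by decide

lemma inv_id : ∀ j k : Fin 23, ∑ i : Fin 23, gramC j i * NInv i k = if j = k then 1 else 0 := by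
  decide

lemma myGB_single (v : Fin 23 → ℤ) (i : Fin 23) :
    GB v (Pi.single i 1) = ∑ j : Fin 23, gramC j i * v j := by
  simp only [GB]
  refine Finset.sum_congr rfl fun j _ => ?_
  rw [Finset.sum_eq_single i]
  · simp
  · intro k _ hk
    rw [Pi.single_eq_of_ne hk, mul_zero]
  · intro h; exact absurd (Finset.mem_univ i) h

lemma reduce_to_prime (N : Submodule ℤ (Fin 23 → ℤ)) :
    ∀ k : ℕ, ∀ n : ℤ, n.natAbs = k → n ≠ 0 → ∀ x : Fin 23 → ℤ, n • x ∈ N → x ∉ N →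
    ∃ (p : ℤ) (y : Fin 23 → ℤ), Prime p ∧ p • y ∈ N ∧ y ∉ N := by
  intro k
  induction k using Nat.strong_induction_on with
  | _ k ih =>
    intro n hk hn x hmem hx
    by_cases h1 : n.natAbs = 1
    · exfalso
      apply hx
      rcases Int.natAbs_eq_iff.mp h1 with h | h
      · rw [h] at hmem; simpa using hmem
      · rw [h] at hmem
        have hx' : x = (-1 : ℤ) • ((-1 : ℤ) • x) := by simp
        rw [hx']
        exact N.smul_mem _ hmem
    · obtain ⟨p, hp, hdvd⟩ := Int.exists_prime_and_dvd h1
      obtain ⟨m, rfl⟩ := hdvd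
      by_cases hm : m • x ∈ N
      · have hmne : m ≠ 0 := by rintro rfl; simp at hn
        have h2p : 2 ≤ p.natAbs := (Int.prime_iff_natAbs_prime.mp hp).two_le
        have hm1 : 1 ≤ m.natAbs := Nat.one_le_iff_ne_zero.mpr (Int.natAbs_ne_zero.mpr hmne)
        have hlt : m.natAbs < k := by
          rw [← hk, Int.natAbs_mul]
          nlinarith
        exact ih _ hlt m rfl hmne x hm hx
      · exact ⟨p, m • x, hp, by rwa [← mul_smul], hm⟩


/-- If `v ∈ Γ` is primitive and `ℤh² + ℤv` is not saturated in `Γ̄`, then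
`(v.w) ≡ 0 (mod 3)` for all `w ∈ Γ`. -/
theorem stmt_14 (v : Fin 23 → ℤ) (hvG : inGamma v) (hv : PrimitiveC v)
    (hns : ∃ x : Fin 23 → ℤ,
      (∃ n : ℤ, n ≠ 0 ∧ n • x ∈ Submodule.span ℤ ({h2, v} : Set (Fin 23 → ℤ))) ∧
      x ∉ Submodule.span ℤ ({h2, v} : Set (Fin 23 → ℤ))) :
    ∀ w : Fin 23 → ℤ, inGamma w → (3 : ℤ) ∣ GB v w := by
  intro w hw
  have hw' : GB h2 w = 0 := hw
  have hGhv : GB h2 v = 0 := hvG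
  have hGvh : GB v h2 = 0 := by rw [myGB_symm]; exact hGhv
  obtain ⟨x₀, ⟨n, hn, hmem⟩, hx₀⟩ := hns
  obtain ⟨p, x, hp, hpx, hx⟩ :=
    reduce_to_prime (Submodule.span ℤ ({h2, v} : Set (Fin 23 → ℤ))) n.natAbs n rfl hn x₀ hmem hx₀
  obtain ⟨a, b, hab⟩ := Submodule.mem_span_pair.mp hpx
  have hpz : p ≠ 0 := hp.ne_zero
  have hnotboth : ¬ (p ∣ a ∧ p ∣ b) := by
    rintro ⟨⟨a', rfl⟩, ⟨b', rfl⟩⟩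
    apply hx
    refine Submodule.mem_span_pair.mpr ⟨a', b', ?_⟩
    have h1 : p • (a' • h2 + b' • v) = p • x := by
      rw [← hab, smul_add, smul_smul, smul_smul]
    exact smul_right_injective (Fin 23 → ℤ) hpz h1
  have hA : a * (-3) = p * GB h2 x := by
    have h1 := congrArg (GB h2) hab
    rw [GB_add_right, GB_smul_right, GB_smul_right, GB_smul_right, myGB_hh, hGhv] at h1
    linarith
  have hW : ∀ u : Fin 23 → ℤ, GB h2 u = 0 → b * GB v u = p * GB u x := by
    intro u hu
    have h1 := congrArg (GB u) hab
    rw [GB_add_right, GB_smul_right, GB_smul_right, GB_smul_right,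
      myGB_symm u h2, hu, myGB_symm u v] at h1
    linarith
  by_cases hp3 : p ∣ 3
  · have hassoc := Int.associated_iff.mp (hp.associated_of_dvd Int.prime_three hp3)
    have h3p : (3 : ℤ) ∣ p := by rcases hassoc with h | h <;> simp [h]
    have hdvd3 : ∀ c : ℤ, p ∣ c ↔ (3 : ℤ) ∣ c := by
      rcases hassoc with h | h <;> subst h <;> simp [neg_dvd]
    have h3b : ¬ (3 : ℤ) ∣ b := by
      intro hb
      apply hnotboth
      refine ⟨(hdvd3 a).mpr ?_, (hdvd3 b).mpr hb⟩
      obtain ⟨b', rfl⟩ := hb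
      have h20 := congrFun hab 20
      simp only [Pi.add_apply, Pi.smul_apply, smul_eq_mul, h2_20, mul_one] at h20
      have ha20 : a = p * x 20 - 3 * (b' * v 20) := by linarith
      rw [ha20]
      exact dvd_sub (h3p.mul_right _) ⟨b' * v 20, rfl⟩
    have h3 : (3 : ℤ) ∣ b * GB v w := (hW w hw') ▸ h3p.mul_right _
    exact (Int.prime_three.dvd_mul.mp h3).resolve_left h3b
  · have hpa : p ∣ a := by
      have h1 : p ∣ a * (-3) := hA ▸ Dvd.intro _ rfl
      rcases hp.dvd_mul.mp h1 with h | h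
      · exact h
      · exact absurd (dvd_neg.mp h) hp3
    have hpb : ¬ p ∣ b := fun h => hnotboth ⟨hpa, h⟩
    have hkey : ∀ u : Fin 23 → ℤ, GB h2 u = 0 → p ∣ GB v u := by
      intro u hu
      have h1 : p ∣ b * GB v u := (hW u hu) ▸ Dvd.intro _ rfl
      exact (hp.dvd_mul.mp h1).resolve_left hpb
    have hei : ∀ i : Fin 23, p ∣ GB v (Pi.single i 1) := by
      intro i
      set c := GB h2 (Pi.single i 1) with hc
      have hu : GB h2 ((3 : ℤ) • Pi.single i 1 + c • h2) = 0 := by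
        rw [GB_add_right, GB_smul_right, GB_smul_right, myGB_hh, ← hc]; ring
      have h2' := hkey _ hu
      rw [GB_add_right, GB_smul_right, GB_smul_right, hGvh, mul_zero, add_zero] at h2'
      exact (hp.dvd_mul.mp h2').resolve_left (fun h => hp3 h)
    have hcol : ∀ i : Fin 23, p ∣ ∑ j : Fin 23, gramC j i * v j :=
      fun i => myGB_single v i ▸ hei i
    have hvk : ∀ k : Fin 23, p ∣ v k := by
      intro k
      have hviden : v k = ∑ i : Fin 23, (∑ j : Fin 23, gramC j i * v j) * NInv i k := by
        have hs : ∑ i : Fin 23, (∑ j : Fin 23, gramC j i * v j) * NInv i k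
            = ∑ j : Fin 23, (∑ i : Fin 23, gramC j i * NInv i k) * v j := by
          calc ∑ i : Fin 23, (∑ j : Fin 23, gramC j i * v j) * NInv i k
              = ∑ i : Fin 23, ∑ j : Fin 23, gramC j i * v j * NInv i k := by
                exact Finset.sum_congr rfl fun i _ => Finset.sum_mul _ _ _
            _ = ∑ j : Fin 23, ∑ i : Fin 23, gramC j i * v j * NInv i k := Finset.sum_comm
            _ = ∑ j : Fin 23, (∑ i : Fin 23, gramC j i * NInv i k) * v j := by
                refine Finset.sum_congr rfl fun j _ => ?_
                rw [Finset.sum_mul]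
                exact Finset.sum_congr rfl fun i _ => by ring
        rw [hs]
        simp only [inv_id, ite_mul, one_mul, zero_mul]
        rw [Finset.sum_ite_eq' Finset.univ k v]
        simp
      rw [hviden]
      exact Finset.dvd_sum fun i _ => (hcol i).mul_right _
    exfalso
    apply hv
    refine ⟨p, fun k => v k / p, ?_, ?_⟩
    · have h2p : 2 ≤ p.natAbs := (Int.prime_iff_natAbs_prime.mp hp).two_le
      rw [Int.abs_eq_natAbs]
      exact_mod_cast h2p
    · funext k
      simp only [Pi.smul_apply, smul_eq_mul]
      exact (Int.mul_ediv_cancel' (hvk k)).symm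
end

section
/- The submodule ℤh² + Γ of Γ̄ has index 3; that is, the quotient group Γ̄/(ℤh² + (h²)^⊥) is cyclic of order 3. -/
open scoped BigOperators

section Aux
lemma GB_add_left' (x y z : Fin 23 → ℤ) : GB (x + y) z = GB x z + GB y z := by
  simp only [GB, Pi.add_apply, ← Finset.sum_add_distrib]
  refine Finset.sum_congr rfl fun i _ => Finset.sum_congr rfl fun j _ => ?_; ring

lemma GB_single' (a : Fin 23) (x : Fin 23 → ℤ) :
    GB (Pi.single a 1) x = ∑ j, gramC a j * x j := by
  unfold GB
  rw [Finset.sum_eq_single a]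
  · simp
  · intro b _ hb; simp [Pi.single_eq_of_ne hb]
  · simp

lemma row_last' (a : Fin 23) (ha : 20 ≤ a.val) (j : Fin 23) :
    gramC a j = if a = j then -1 else 0 := by
  unfold gramC
  have h1 : ¬ (a.val < 8 ∧ j.val < 8) := by omega
  have h2 : ¬ (8 ≤ a.val ∧ a.val < 16 ∧ 8 ≤ j.val ∧ j.val < 16) := by omega
  have h3 : ¬ ((a.val = 16 ∧ j.val = 17) ∨ (a.val = 17 ∧ j.val = 16) ∨
      (a.val = 18 ∧ j.val = 19) ∨ (a.val = 19 ∧ j.val = 18)) := by omega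
  simp [h1, h2, h3, ha]

lemma GB_h2' (x : Fin 23 → ℤ) : GB h2 x = -(x 20 + x 21 + x 22) := by
  have key : ∀ a : Fin 23, 20 ≤ a.val → GB (Pi.single a 1) x = -(x a) := by
    intro a ha
    rw [GB_single']
    simp only [row_last' a ha, ite_mul, neg_mul, one_mul, zero_mul]
    rw [Finset.sum_ite_eq]
    simp
  unfold h2
  rw [GB_add_left', GB_add_left', key 20 (by decide), key 21 (by decide),
    key 22 (by decide)]
  ring

lemma h2_21 : h2 21 = 1 := by decide
lemma h2_22 : h2 22 = 1 := by decide
end Aux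

/-- The submodule `ℤh² + Γ` has index `3` in `Γ̄`, i.e. the quotient
`Γ̄/(ℤh² + (h²)^⊥)` is (cyclic) of order `3`. -/
theorem stmt_15 :
    ((Submodule.span ℤ ({h2} : Set (Fin 23 → ℤ)) ⊔ Gamma).toAddSubgroup).index = 3 := by
  set f : (Fin 23 → ℤ) →+ ZMod 3 := AddMonoidHom.mk'
    (fun x => ((x 20 + x 21 + x 22 : ℤ) : ZMod 3))
    (by intro a b; simp only [Pi.add_apply]; push_cast; ring) with hf
  have hker : (Submodule.span ℤ ({h2} : Set (Fin 23 → ℤ)) ⊔ Gamma).toAddSubgroup = f.ker := by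
    ext x
    simp only [Submodule.mem_toAddSubgroup, AddMonoidHom.mem_ker, hf, AddMonoidHom.mk'_apply]
    constructor
    · intro hx
      rcases Submodule.mem_sup.mp hx with ⟨a, ha, b, hb, rfl⟩
      rcases Submodule.mem_span_singleton.mp ha with ⟨c, rfl⟩
      have hb' : GB h2 b = 0 := hb
      have hsum : b 20 + b 21 + b 22 = 0 := by
        have := GB_h2' b; rw [hb'] at this; linarith
      have : ((c • h2 + b) 20 + (c • h2 + b) 21 + (c • h2 + b) 22 : ℤ) = 3 * c := by
        simp only [Pi.add_apply, Pi.smul_apply, smul_eq_mul, h2_20, h2_21, h2_22]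
        linarith
      rw [this]
      push_cast
      rw [show ((3:ZMod 3)) = 0 by decide, zero_mul]
    · intro hx
      have h3 : (3:ℤ) ∣ (x 20 + x 21 + x 22) :=
        (ZMod.intCast_zmod_eq_zero_iff_dvd _ 3).mp hx
      obtain ⟨c, hc⟩ := h3
      refine Submodule.mem_sup.mpr ⟨c • h2,
        Submodule.mem_span_singleton.mpr ⟨c, rfl⟩, x - c • h2, ?_, by abel⟩
      show GB h2 (x - c • h2) = 0
      rw [GB_h2']
      simp only [Pi.sub_apply, Pi.smul_apply, smul_eq_mul, h2_20, h2_21, h2_22]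
      linarith
  rw [hker, AddSubgroup.index_ker]
  have hsurj : Function.Surjective f := by
    intro y
    obtain ⟨a, ha⟩ := ZMod.intCast_surjective y
    refine ⟨Pi.single 20 a, ?_⟩
    simp only [hf, AddMonoidHom.mk'_apply, Pi.single_eq_same,
      Pi.single_eq_of_ne (by decide : (21:Fin 23) ≠ 20),
      Pi.single_eq_of_ne (by decide : (22:Fin 23) ≠ 20), add_zero]
    exact ha
  rw [AddMonoidHom.range_eq_top.mpr hsurj,
    Nat.card_congr AddSubgroup.topEquiv.toEquiv, Nat.card_zmod]
end

section
/- The orthogonal complement A₂^⊥ := {x ∈ Λ̃ : (x.λ₁) = (x.λ₂) = 0} equals the direct sum of the two E8(−1)-summands, U₁, U₂, and ℤμ₁ + ℤμ₂; in particular, A₂^⊥ is ℤ-linearly isometric to the lattice with block-diagonal Gram matrix E8(−1) ⊕ E8(−1) ⊕ U ⊕ U ⊕ A₂(−1), where A₂(−1) is ℤ² with Gram matrix [[−2,1],[1,−2]]. -/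
open scoped BigOperators

noncomputable section

/-- The Gram matrix of the Mukai lattice `Λ̃ = E₈(-1)² ⊕ U₁ ⊕ U₂ ⊕ U₃ ⊕ U₄` on `ℤ²⁴`,
where the last hyperbolic summand `U₄` carries the sign-changed pairing `(e₄.f₄) = -1`. -/
def gramM : Fin 24 → Fin 24 → ℤ := fun i j =>
  if i.val < 8 ∧ j.val < 8 then
    E8M ⟨i.val % 8, Nat.mod_lt _ (by norm_num)⟩ ⟨j.val % 8, Nat.mod_lt _ (by norm_num)⟩
  else if 8 ≤ i.val ∧ i.val < 16 ∧ 8 ≤ j.val ∧ j.val < 16 then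
    E8M ⟨(i.val - 8) % 8, Nat.mod_lt _ (by norm_num)⟩ ⟨(j.val - 8) % 8, Nat.mod_lt _ (by norm_num)⟩
  else if (i.val = 16 ∧ j.val = 17) ∨ (i.val = 17 ∧ j.val = 16) ∨
      (i.val = 18 ∧ j.val = 19) ∨ (i.val = 19 ∧ j.val = 18) ∨
      (i.val = 20 ∧ j.val = 21) ∨ (i.val = 21 ∧ j.val = 20) then 1
  else if (i.val = 22 ∧ j.val = 23) ∨ (i.val = 23 ∧ j.val = 22) then -1
  else 0

/-- The bilinear (Mukai) form of the lattice `Λ̃`. -/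
def MB (x y : Fin 24 → ℤ) : ℤ := ∑ i, ∑ j, gramM i j * x i * y j

/-- `λ₁ = e₄ - f₄`. -/
def l1 : Fin 24 → ℤ := Pi.single 22 1 - Pi.single 23 1

/-- `λ₂ = e₃ + f₃ + f₄`. -/
def l2 : Fin 24 → ℤ := Pi.single 20 1 + Pi.single 21 1 + Pi.single 23 1

/-- `μ₁ = e₃ - f₃`. -/
def m1 : Fin 24 → ℤ := Pi.single 20 1 - Pi.single 21 1

/-- `μ₂ = -e₃ - e₄ - f₄`. -/
def m2 : Fin 24 → ℤ := -(Pi.single 20 1) - Pi.single 22 1 - Pi.single 23 1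

lemma MB_add_left (x y z : Fin 24 → ℤ) : MB (x + y) z = MB x z + MB y z := by
  simp only [MB, Pi.add_apply, ← Finset.sum_add_distrib]
  refine Finset.sum_congr rfl fun i _ => Finset.sum_congr rfl fun j _ => ?_
  ring

lemma MB_smul_left (c : ℤ) (x y : Fin 24 → ℤ) : MB (c • x) y = c * MB x y := by
  simp only [MB, Finset.mul_sum]
  refine Finset.sum_congr rfl fun i _ => Finset.sum_congr rfl fun j _ => ?_
  simp only [Pi.smul_apply, smul_eq_mul]; ring

/-- Isometries of the Mukai lattice `Λ̃`. -/
def IsIsomM (g : (Fin 24 → ℤ) ≃ₗ[ℤ] (Fin 24 → ℤ)) : Prop := ∀ x y, MB (g x) (g y) = MB x y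

end
lemma MB_zero_left (y : Fin 24 → ℤ) : MB 0 y = 0 := by simp [MB]

/-- `A₂^⊥ = {x ∈ Λ̃ : (x.λ₁) = (x.λ₂) = 0}` as a submodule of `Λ̃`. -/
def A2perp : Submodule ℤ (Fin 24 → ℤ) where
  carrier := {x | MB x l1 = 0 ∧ MB x l2 = 0}
  add_mem' := by
    rintro a b ⟨ha1, ha2⟩ ⟨hb1, hb2⟩
    constructor <;> rw [MB_add_left] <;> omega
  zero_mem' := ⟨MB_zero_left _, MB_zero_left _⟩
  smul_mem' := by
    rintro c x ⟨h1, h2⟩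
    exact ⟨by rw [MB_smul_left, h1, mul_zero], by rw [MB_smul_left, h2, mul_zero]⟩
/-- The Gram matrix of the lattice `E₈(-1)² ⊕ U² ⊕ A₂(-1)` on `ℤ²²`. -/
def gramA : Fin 22 → Fin 22 → ℤ := fun i j =>
  if i.val < 8 ∧ j.val < 8 then
    E8M ⟨i.val % 8, Nat.mod_lt _ (by norm_num)⟩ ⟨j.val % 8, Nat.mod_lt _ (by norm_num)⟩
  else if 8 ≤ i.val ∧ i.val < 16 ∧ 8 ≤ j.val ∧ j.val < 16 then
    E8M ⟨(i.val - 8) % 8, Nat.mod_lt _ (by norm_num)⟩ ⟨(j.val - 8) % 8, Nat.mod_lt _ (by norm_num)⟩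
  else if (i.val = 16 ∧ j.val = 17) ∨ (i.val = 17 ∧ j.val = 16) ∨
      (i.val = 18 ∧ j.val = 19) ∨ (i.val = 19 ∧ j.val = 18) then 1
  else if (i.val = 20 ∧ j.val = 20) ∨ (i.val = 21 ∧ j.val = 21) then -2
  else if (i.val = 20 ∧ j.val = 21) ∨ (i.val = 21 ∧ j.val = 20) then 1
  else 0

/-- The bilinear form of the lattice `E₈(-1)² ⊕ U² ⊕ A₂(-1)`. -/
def AB (x y : Fin 22 → ℤ) : ℤ := ∑ i, ∑ j, gramA i j * x i * y j

-- SECTION A: bilinearity + single lemmas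
lemma MB_add_right (x y z : Fin 24 → ℤ) : MB x (y + z) = MB x y + MB x z := by
  simp only [MB, Pi.add_apply, ← Finset.sum_add_distrib]
  refine Finset.sum_congr rfl fun i _ => Finset.sum_congr rfl fun j _ => ?_
  ring

lemma MB_smul_right (c : ℤ) (x y : Fin 24 → ℤ) : MB x (c • y) = c * MB x y := by
  simp only [MB, Finset.mul_sum]
  refine Finset.sum_congr rfl fun i _ => Finset.sum_congr rfl fun j _ => ?_
  simp only [Pi.smul_apply, smul_eq_mul]; ring

lemma MB_sub_right (x y z : Fin 24 → ℤ) : MB x (y - z) = MB x y - MB x z := by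
  simp only [MB, Pi.sub_apply, ← Finset.sum_sub_distrib]
  refine Finset.sum_congr rfl fun i _ => Finset.sum_congr rfl fun j _ => ?_
  ring

lemma MB_neg_right (x y : Fin 24 → ℤ) : MB x (-y) = - MB x y := by
  have := MB_sub_right x 0 y
  simpa [MB] using this

lemma MB_single_right (x : Fin 24 → ℤ) (k : Fin 24) :
    MB x (Pi.single k 1) = ∑ i, gramM i k * x i := by
  unfold MB
  refine Finset.sum_congr rfl fun i _ => ?_
  rw [Finset.sum_eq_single k]
  · simp
  · intro j _ hj; simp [Pi.single_eq_of_ne hj]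
  · intro h; simp at h

lemma MB_single_left (k : Fin 24) (y : Fin 24 → ℤ) :
    MB (Pi.single k 1) y = ∑ j, gramM k j * y j := by
  unfold MB
  rw [Finset.sum_eq_single k]
  · refine Finset.sum_congr rfl fun j _ => ?_; simp
  · intro i _ hi
    apply Finset.sum_eq_zero; intro j _; simp [Pi.single_eq_of_ne hi]
  · intro h; simp at h

-- SECTION B: column/row formulas
lemma MBs20r (x : Fin 24 → ℤ) : MB x (Pi.single 20 1) = x 21 := by
  rw [MB_single_right]
  simp [Fin.sum_univ_succ, gramM, show ((20:Fin 24):ℕ) = 20 from rfl]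
lemma MBs21r (x : Fin 24 → ℤ) : MB x (Pi.single 21 1) = x 20 := by
  rw [MB_single_right]
  simp [Fin.sum_univ_succ, gramM, show ((21:Fin 24):ℕ) = 21 from rfl]
lemma MBs22r (x : Fin 24 → ℤ) : MB x (Pi.single 22 1) = -x 23 := by
  rw [MB_single_right]
  simp [Fin.sum_univ_succ, gramM, show ((22:Fin 24):ℕ) = 22 from rfl]
lemma MBs23r (x : Fin 24 → ℤ) : MB x (Pi.single 23 1) = -x 22 := by
  rw [MB_single_right]
  simp [Fin.sum_univ_succ, gramM, show ((23:Fin 24):ℕ) = 23 from rfl]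
lemma MBs20l (y : Fin 24 → ℤ) : MB (Pi.single 20 1) y = y 21 := by
  rw [MB_single_left]
  simp [Fin.sum_univ_succ, gramM, show ((20:Fin 24):ℕ) = 20 from rfl]
lemma MBs21l (y : Fin 24 → ℤ) : MB (Pi.single 21 1) y = y 20 := by
  rw [MB_single_left]
  simp [Fin.sum_univ_succ, gramM, show ((21:Fin 24):ℕ) = 21 from rfl]
lemma MBs22l (y : Fin 24 → ℤ) : MB (Pi.single 22 1) y = -y 23 := by
  rw [MB_single_left]
  simp [Fin.sum_univ_succ, gramM, show ((22:Fin 24):ℕ) = 22 from rfl]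
lemma MBs23l (y : Fin 24 → ℤ) : MB (Pi.single 23 1) y = -y 22 := by
  rw [MB_single_left]
  simp [Fin.sum_univ_succ, gramM, show ((23:Fin 24):ℕ) = 23 from rfl]

-- SECTION C: formulas for l's and m's
lemma MB_l1_eq (x : Fin 24 → ℤ) : MB x l1 = x 22 - x 23 := by
  rw [l1, MB_sub_right, MBs22r, MBs23r]; ring
lemma MB_l2_eq (x : Fin 24 → ℤ) : MB x l2 = x 20 + x 21 - x 22 := by
  rw [l2, MB_add_right, MB_add_right, MBs20r, MBs21r, MBs23r]; ring
lemma MB_m1_right (x : Fin 24 → ℤ) : MB x m1 = x 21 - x 20 := by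
  rw [m1, MB_sub_right, MBs20r, MBs21r]
lemma MB_m2_right (x : Fin 24 → ℤ) : MB x m2 = -x 21 + x 23 + x 22 := by
  rw [m2, MB_sub_right, MB_sub_right, MB_neg_right, MBs20r, MBs22r, MBs23r]; ring
lemma MB_sub_left (x y z : Fin 24 → ℤ) : MB (x - y) z = MB x z - MB y z := by
  simp only [MB, Pi.sub_apply, ← Finset.sum_sub_distrib]
  refine Finset.sum_congr rfl fun i _ => Finset.sum_congr rfl fun j _ => ?_
  ring

lemma MB_neg_left (x y : Fin 24 → ℤ) : MB (-x) y = - MB x y := by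
  have := MB_sub_left 0 x y
  simpa [MB] using this

lemma MB_m1_left (y : Fin 24 → ℤ) : MB m1 y = y 21 - y 20 := by
  rw [m1, MB_sub_left, MBs20l, MBs21l]
lemma MB_m2_left (y : Fin 24 → ℤ) : MB m2 y = -y 21 + y 23 + y 22 := by
  rw [m2, MB_sub_left, MB_sub_left, MB_neg_left, MBs20l, MBs22l, MBs23l]; ring
-- SECTION D: AB bilinearity and single lemmas
lemma AB_add_left (x y z : Fin 22 → ℤ) : AB (x + y) z = AB x z + AB y z := by
  simp only [AB, Pi.add_apply, ← Finset.sum_add_distrib]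
  refine Finset.sum_congr rfl fun i _ => Finset.sum_congr rfl fun j _ => ?_
  ring
lemma AB_add_right (x y z : Fin 22 → ℤ) : AB x (y + z) = AB x y + AB x z := by
  simp only [AB, Pi.add_apply, ← Finset.sum_add_distrib]
  refine Finset.sum_congr rfl fun i _ => Finset.sum_congr rfl fun j _ => ?_
  ring
lemma AB_smul_left (c : ℤ) (x y : Fin 22 → ℤ) : AB (c • x) y = c * AB x y := by
  simp only [AB, Finset.mul_sum]
  refine Finset.sum_congr rfl fun i _ => Finset.sum_congr rfl fun j _ => ?_
  simp only [Pi.smul_apply, smul_eq_mul]; ring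
lemma AB_smul_right (c : ℤ) (x y : Fin 22 → ℤ) : AB x (c • y) = c * AB x y := by
  simp only [AB, Finset.mul_sum]
  refine Finset.sum_congr rfl fun i _ => Finset.sum_congr rfl fun j _ => ?_
  simp only [Pi.smul_apply, smul_eq_mul]; ring
lemma AB_single_right (x : Fin 22 → ℤ) (k : Fin 22) :
    AB x (Pi.single k 1) = ∑ i, gramA i k * x i := by
  unfold AB
  refine Finset.sum_congr rfl fun i _ => ?_
  rw [Finset.sum_eq_single k]
  · simp
  · intro j _ hj; simp [Pi.single_eq_of_ne hj]
  · intro h; simp at h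
lemma AB_single_left (k : Fin 22) (y : Fin 22 → ℤ) :
    AB (Pi.single k 1) y = ∑ j, gramA k j * y j := by
  unfold AB
  rw [Finset.sum_eq_single k]
  · refine Finset.sum_congr rfl fun j _ => ?_; simp
  · intro i _ hi
    apply Finset.sum_eq_zero; intro j _; simp [Pi.single_eq_of_ne hi]
  · intro h; simp at h
lemma ABs20r (x : Fin 22 → ℤ) : AB x (Pi.single 20 1) = -2 * x 20 + x 21 := by
  rw [AB_single_right]
  simp [Fin.sum_univ_succ, gramA, show ((20:Fin 22):ℕ) = 20 from rfl]
lemma ABs21r (x : Fin 22 → ℤ) : AB x (Pi.single 21 1) = x 20 - 2 * x 21 := by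
  rw [AB_single_right]
  simp [Fin.sum_univ_succ, gramA, show ((21:Fin 22):ℕ) = 21 from rfl]; ring_nf
lemma ABs20l (y : Fin 22 → ℤ) : AB (Pi.single 20 1) y = -2 * y 20 + y 21 := by
  rw [AB_single_left]
  simp [Fin.sum_univ_succ, gramA, show ((20:Fin 22):ℕ) = 20 from rfl]
lemma ABs21l (y : Fin 22 → ℤ) : AB (Pi.single 21 1) y = y 20 - 2 * y 21 := by
  rw [AB_single_left]
  simp [Fin.sum_univ_succ, gramA, show ((21:Fin 22):ℕ) = 21 from rfl]; ring_nf
-- SECTION E: extensions by zero and the crux isometry on the first 20 coordinates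
def e24 (p : Fin 20 → ℤ) : Fin 24 → ℤ := fun i => if h : i.val < 20 then p ⟨i.val, h⟩ else 0
def e22 (p : Fin 20 → ℤ) : Fin 22 → ℤ := fun i => if h : i.val < 20 then p ⟨i.val, h⟩ else 0

lemma sum_trunc {n m : ℕ} (h : n ≤ m) (F : Fin m → ℤ) (hF : ∀ i : Fin m, n ≤ i.val → F i = 0) :
    ∑ i, F i = ∑ i : Fin n, F (Fin.castLE h i) := by
  have : ∑ i : Fin n, F (Fin.castLE h i)
      = ∑ i ∈ Finset.univ.map (Fin.castLEEmb h), F i := by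
    rw [Finset.sum_map]; rfl
  rw [this]
  symm
  apply Finset.sum_subset (Finset.subset_univ _)
  intro x _ hx
  apply hF
  by_contra hc
  push_neg at hc
  exact hx (Finset.mem_map.2 ⟨⟨x.val, hc⟩, Finset.mem_univ _, Fin.ext rfl⟩)

lemma gram_agree : ∀ i j : Fin 20,
    gramM (Fin.castLE (by norm_num) i) (Fin.castLE (by norm_num) j)
      = gramA (Fin.castLE (by norm_num) i) (Fin.castLE (by norm_num) j) := by decide

lemma e24_castLE (p : Fin 20 → ℤ) (i : Fin 20) :
    e24 p (Fin.castLE (by norm_num) i) = p i := by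
  simp only [e24, Fin.castLE]
  rw [dif_pos i.isLt]
lemma e22_castLE (p : Fin 20 → ℤ) (i : Fin 20) :
    e22 p (Fin.castLE (by norm_num) i) = p i := by
  simp only [e22, Fin.castLE]
  rw [dif_pos i.isLt]
lemma e24_hi (p : Fin 20 → ℤ) (i : Fin 24) (h : 20 ≤ i.val) : e24 p i = 0 :=
  dif_neg (by omega)
lemma e22_hi (p : Fin 20 → ℤ) (i : Fin 22) (h : 20 ≤ i.val) : e22 p i = 0 :=
  dif_neg (by omega)

lemma crux (p q : Fin 20 → ℤ) : MB (e24 p) (e24 q) = AB (e22 p) (e22 q) := by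
  unfold MB AB
  rw [sum_trunc (show (20:ℕ) ≤ 24 by norm_num) _
      (fun i hi => by
        apply Finset.sum_eq_zero; intro j _
        rw [e24_hi p i hi]; ring),
    sum_trunc (show (20:ℕ) ≤ 22 by norm_num) _
      (fun i hi => by
        apply Finset.sum_eq_zero; intro j _
        rw [e22_hi p i hi]; ring)]
  refine Finset.sum_congr rfl fun i _ => ?_
  rw [sum_trunc (show (20:ℕ) ≤ 24 by norm_num) _
      (fun j hj => by rw [e24_hi q j hj]; ring),
    sum_trunc (show (20:ℕ) ≤ 22 by norm_num) _
      (fun j hj => by rw [e22_hi q j hj]; ring)]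
  refine Finset.sum_congr rfl fun j _ => ?_
  rw [e24_castLE, e24_castLE, e22_castLE, e22_castLE, gram_agree]
-- SECTION F: coordinate formulas and decomposition
lemma m1_apply : ∀ i : Fin 24, m1 i =
    if i.val = 20 then 1 else if i.val = 21 then -1 else 0 := by decide
lemma m2_apply : ∀ i : Fin 24, m2 i =
    if i.val = 20 then -1 else if i.val = 22 then -1 else if i.val = 23 then -1 else 0 := by
  decide
lemma s20_apply : ∀ i : Fin 22, (Pi.single (20 : Fin 22) (1:ℤ) : Fin 22 → ℤ) i =
    if i.val = 20 then 1 else 0 := by decide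
lemma s21_apply : ∀ i : Fin 22, (Pi.single (21 : Fin 22) (1:ℤ) : Fin 22 → ℤ) i =
    if i.val = 21 then 1 else 0 := by decide

lemma decomp {x : Fin 24 → ℤ} (h1 : MB x l1 = 0) (h2 : MB x l2 = 0) :
    x = e24 (fun i => x (Fin.castLE (by norm_num) i)) + (-x 21) • m1 + (-x 22) • m2 := by
  rw [MB_l1_eq] at h1
  rw [MB_l2_eq] at h2
  funext i
  simp only [Pi.add_apply, Pi.smul_apply, smul_eq_mul, m1_apply, m2_apply]
  by_cases h : i.val < 20
  · rw [show e24 (fun i => x (Fin.castLE (by norm_num) i)) i = x i from dif_pos h]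
    rw [if_neg (by omega), if_neg (by omega), if_neg (by omega), if_neg (by omega),
      if_neg (by omega)]
    ring
  · rw [e24_hi _ i (by omega)]
    have h20 : i.val = 20 ∨ i.val = 21 ∨ i.val = 22 ∨ i.val = 23 := by omega
    rcases h20 with h' | h' | h' | h'
    · have hi : i = 20 := Fin.ext h'
      subst hi
      simp only [show ((20:Fin 24):ℕ) = 20 from rfl]; norm_num; omega
    · have hi : i = 21 := Fin.ext h'
      subst hi
      simp only [show ((21:Fin 24):ℕ) = 21 from rfl]; norm_num
    · have hi : i = 22 := Fin.ext h'
      subst hi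
      simp only [show ((22:Fin 24):ℕ) = 22 from rfl]; norm_num
    · have hi : i = 23 := Fin.ext h'
      subst hi
      simp only [show ((23:Fin 24):ℕ) = 23 from rfl]; norm_num; omega

-- the map on coordinates
def Gfun (x : Fin 24 → ℤ) : Fin 22 → ℤ := fun i =>
  if h : i.val < 20 then x ⟨i.val, by omega⟩ else if i.val = 20 then -x 21 else -x 22

lemma Gdecomp (x : Fin 24 → ℤ) :
    Gfun x = e22 (fun i => x (Fin.castLE (by norm_num) i))
      + (-x 21) • (Pi.single (20 : Fin 22) (1:ℤ) : Fin 22 → ℤ)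
      + (-x 22) • (Pi.single (21 : Fin 22) (1:ℤ) : Fin 22 → ℤ) := by
  funext i
  simp only [Pi.add_apply, Pi.smul_apply, smul_eq_mul, s20_apply, s21_apply, Gfun]
  by_cases h : i.val < 20
  · rw [dif_pos h, show e22 (fun i => x (Fin.castLE (by norm_num) i)) i = x ⟨i.val, by omega⟩
        from dif_pos h, if_neg (by omega), if_neg (by omega)]
    ring
  · rw [dif_neg h, e22_hi _ i (by omega)]
    have h20 : i.val = 20 ∨ i.val = 21 := by omega
    rcases h20 with h' | h'
    · rw [if_pos h', if_pos h', if_neg (by omega)]; ring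
    · rw [if_neg (by omega), if_neg (by omega), if_pos h']; ring

-- SECTION G: expansion lemmas
lemma MB_expand (p q : Fin 20 → ℤ) (a b c d : ℤ) :
    MB (e24 p + a • m1 + b • m2) (e24 q + c • m1 + d • m2)
      = MB (e24 p) (e24 q) + (-2*a*c + a*d + b*c - 2*b*d) := by
  simp only [MB_add_left, MB_add_right, MB_smul_left, MB_smul_right,
    MB_m1_right, MB_m2_right, MB_m1_left, MB_m2_left, Pi.add_apply, Pi.smul_apply,
    smul_eq_mul, m1_apply, m2_apply, show ((20:Fin 24):ℕ) = 20 from rfl,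
    show ((21:Fin 24):ℕ) = 21 from rfl, show ((22:Fin 24):ℕ) = 22 from rfl,
    show ((23:Fin 24):ℕ) = 23 from rfl]
  rw [e24_hi p 20 (by decide), e24_hi p 21 (by decide), e24_hi p 22 (by decide),
    e24_hi p 23 (by decide), e24_hi q 20 (by decide), e24_hi q 21 (by decide),
    e24_hi q 22 (by decide), e24_hi q 23 (by decide)]
  norm_num
  ring
lemma AB_expand (p q : Fin 20 → ℤ) (a b c d : ℤ) :
    AB (e22 p + a • (Pi.single (20:Fin 22) (1:ℤ) : Fin 22 → ℤ)
          + b • (Pi.single (21:Fin 22) (1:ℤ) : Fin 22 → ℤ))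
       (e22 q + c • (Pi.single (20:Fin 22) (1:ℤ) : Fin 22 → ℤ)
          + d • (Pi.single (21:Fin 22) (1:ℤ) : Fin 22 → ℤ))
      = AB (e22 p) (e22 q) + (-2*a*c + a*d + b*c - 2*b*d) := by
  simp only [AB_add_left, AB_add_right, AB_smul_left, AB_smul_right,
    ABs20r, ABs21r, ABs20l, ABs21l, Pi.add_apply, Pi.smul_apply, smul_eq_mul,
    s20_apply, s21_apply, show ((20:Fin 22):ℕ) = 20 from rfl,
    show ((21:Fin 22):ℕ) = 21 from rfl]
  rw [e22_hi p 20 (by decide), e22_hi p 21 (by decide),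
    e22_hi q 20 (by decide), e22_hi q 21 (by decide)]
  norm_num
  ring
-- SECTION H: the inverse map and the linear equivalence
lemma mem_A2perp {x : Fin 24 → ℤ} : x ∈ A2perp ↔ MB x l1 = 0 ∧ MB x l2 = 0 := Iff.rfl

def Hfun (v : Fin 22 → ℤ) : Fin 24 → ℤ :=
  e24 (fun i => v (Fin.castLE (by norm_num) i)) + v 20 • m1 + v 21 • m2

lemma H20 (v : Fin 22 → ℤ) : Hfun v 20 = v 20 - v 21 := by
  simp only [Hfun, Pi.add_apply, Pi.smul_apply, smul_eq_mul, m1_apply, m2_apply,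
    e24_hi _ 20 (by decide), show ((20:Fin 24):ℕ) = 20 from rfl]
  norm_num
  ring
lemma H21 (v : Fin 22 → ℤ) : Hfun v 21 = -v 20 := by
  simp only [Hfun, Pi.add_apply, Pi.smul_apply, smul_eq_mul, m1_apply, m2_apply,
    e24_hi _ 21 (by decide), show ((21:Fin 24):ℕ) = 21 from rfl]
  norm_num
lemma H22 (v : Fin 22 → ℤ) : Hfun v 22 = -v 21 := by
  simp only [Hfun, Pi.add_apply, Pi.smul_apply, smul_eq_mul, m1_apply, m2_apply,
    e24_hi _ 22 (by decide), show ((22:Fin 24):ℕ) = 22 from rfl]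
  norm_num
lemma H23 (v : Fin 22 → ℤ) : Hfun v 23 = -v 21 := by
  simp only [Hfun, Pi.add_apply, Pi.smul_apply, smul_eq_mul, m1_apply, m2_apply,
    e24_hi _ 23 (by decide), show ((23:Fin 24):ℕ) = 23 from rfl]
  norm_num

lemma Hmem (v : Fin 22 → ℤ) : Hfun v ∈ A2perp := by
  rw [mem_A2perp, MB_l1_eq, MB_l2_eq, H20, H21, H22, H23]
  constructor <;> ring

lemma Gfun_add (x y : Fin 24 → ℤ) : Gfun (x + y) = Gfun x + Gfun y := by
  funext i
  simp only [Gfun, Pi.add_apply]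
  split_ifs <;> ring
lemma Gfun_smul (c : ℤ) (x : Fin 24 → ℤ) : Gfun (c • x) = c • Gfun x := by
  funext i
  simp only [Gfun, Pi.smul_apply, smul_eq_mul]
  split_ifs <;> ring

lemma G20 (x : Fin 24 → ℤ) : Gfun x 20 = -x 21 := by
  rw [show Gfun x 20 = if ((20:Fin 22):ℕ) = 20 then -x 21 else -x 22 from
    dif_neg (by decide)]
  exact if_pos rfl
lemma G21 (x : Fin 24 → ℤ) : Gfun x 21 = -x 22 := by
  rw [show Gfun x 21 = if ((21:Fin 22):ℕ) = 20 then -x 21 else -x 22 from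
    dif_neg (by decide)]
  rw [if_neg (by decide)]

lemma left_inv_aux {x : Fin 24 → ℤ} (hx : x ∈ A2perp) : Hfun (Gfun x) = x := by
  obtain ⟨h1, h2⟩ := mem_A2perp.1 hx
  have hp : (fun i : Fin 20 => Gfun x (Fin.castLE (by norm_num) i))
      = fun i : Fin 20 => x (Fin.castLE (by norm_num) i) :=
    funext fun i => dif_pos i.isLt
  rw [Hfun, hp, G20, G21]
  exact (decomp h1 h2).symm

lemma right_inv_aux (v : Fin 22 → ℤ) : Gfun (Hfun v) = v := by
  funext i
  by_cases h : i.val < 20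
  · rw [show Gfun (Hfun v) i = Hfun v ⟨i.val, by omega⟩ from dif_pos h]
    show (e24 (fun i => v (Fin.castLE (by norm_num) i)) + v 20 • m1 + v 21 • m2) ⟨i.val, _⟩ = v i
    simp only [Pi.add_apply, Pi.smul_apply, smul_eq_mul, m1_apply, m2_apply]
    rw [show e24 (fun i => v (Fin.castLE (by norm_num) i)) ⟨i.val, by omega⟩
        = v i from dif_pos h]
    rw [if_neg (by exact (show ¬ i.val = 20 by omega)),
      if_neg (by exact (show ¬ i.val = 21 by omega)),
      if_neg (by exact (show ¬ i.val = 20 by omega)),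
      if_neg (by exact (show ¬ i.val = 22 by omega)),
      if_neg (by exact (show ¬ i.val = 23 by omega))]
    ring
  · have h20 : i.val = 20 ∨ i.val = 21 := by omega
    rcases h20 with h' | h'
    · have hi : i = 20 := Fin.ext h'
      subst hi
      rw [G20, H21]; ring
    · have hi : i = 21 := Fin.ext h'
      subst hi
      rw [G21, H22]; ring

def gIso : A2perp ≃ₗ[ℤ] (Fin 22 → ℤ) where
  toFun x := Gfun x.1
  map_add' x y := by
    show Gfun ↑(x + y) = Gfun ↑x + Gfun ↑y
    rw [Submodule.coe_add, Gfun_add]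
  map_smul' c x := by
    show Gfun ↑(c • x) = c • Gfun ↑x
    rw [Submodule.coe_smul, Gfun_smul]
  invFun v := ⟨Hfun v, Hmem v⟩
  left_inv x := Subtype.ext (left_inv_aux x.2)
  right_inv v := right_inv_aux v

/-- `A₂^⊥ ⊂ Λ̃` equals the direct sum of the two `E₈(-1)`-summands, `U₁`, `U₂`
and `ℤμ₁ + ℤμ₂`; in particular it is isometric to `E₈(-1)² ⊕ U² ⊕ A₂(-1)`. -/
theorem stmt_16 :
    ((A2perp : Set (Fin 24 → ℤ)) =
      {z | ∃ (w : Fin 24 → ℤ) (a b : ℤ), (∀ i : Fin 24, 20 ≤ i.val → w i = 0) ∧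
        z = w + a • m1 + b • m2}) ∧
    ∃ g : A2perp ≃ₗ[ℤ] (Fin 22 → ℤ), ∀ a b : A2perp,
      AB (g a) (g b) = MB (a : Fin 24 → ℤ) (b : Fin 24 → ℤ) := by
  constructor
  · ext z
    simp only [SetLike.mem_coe, Set.mem_setOf_eq]
    constructor
    · intro hz
      obtain ⟨h1, h2⟩ := mem_A2perp.1 hz
      exact ⟨e24 (fun i => z (Fin.castLE (by norm_num) i)), -z 21, -z 22,
        fun i hi => e24_hi _ i hi, decomp h1 h2⟩
    · rintro ⟨w, a, b, hw, rfl⟩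
      rw [mem_A2perp, MB_l1_eq, MB_l2_eq]
      simp only [Pi.add_apply, Pi.smul_apply, smul_eq_mul, m1_apply, m2_apply,
        hw 20 (by decide), hw 21 (by decide), hw 22 (by decide), hw 23 (by decide),
        show ((20:Fin 24):ℕ) = 20 from rfl, show ((21:Fin 24):ℕ) = 21 from rfl,
        show ((22:Fin 24):ℕ) = 22 from rfl, show ((23:Fin 24):ℕ) = 23 from rfl]
      norm_num
  · refine ⟨gIso, fun a b => ?_⟩
    obtain ⟨h1a, h2a⟩ := mem_A2perp.1 a.2
    obtain ⟨h1b, h2b⟩ := mem_A2perp.1 b.2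
    show AB (Gfun ↑a) (Gfun ↑b) = MB (↑a) (↑b)
    rw [Gdecomp (↑a), Gdecomp (↑b), AB_expand, ← crux, ← MB_expand,
      ← decomp h1a h2a, ← decomp h1b h2b]
end

section
/- Let d be a positive integer. If d ≡ 0 (mod 6), then the submodule ℤλ₁ + ℤλ₂ + ℤv_d is saturated in Λ̃, i.e. L_d = ℤλ₁ + ℤλ₂ + ℤv_d. If d ≡ 2 (mod 6), then ℤλ₁ + ℤλ₂ + ℤv_d has index 3 in L_d; in particular, (1/3)(v_d − λ₁ + λ₂) ∈ Λ̃. -/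
open scoped BigOperators

/-- The Noether–Lefschetz vector `v_d ∈ Λ̃`: for `d ≡ 0 (mod 6)` it is `e₁ - (d/6) f₁`, and
for `d ≡ 2 (mod 6)` it is `3(e₁ - ((d-2)/6) f₁) + μ₁ - μ₂`. -/
def vdM (d : ℤ) : Fin 24 → ℤ :=
  if d % 6 = 0 then Pi.single 16 1 - (d / 6) • Pi.single 17 1
  else (3 : ℤ) • (Pi.single 16 1 - ((d - 2) / 6) • Pi.single 17 1) + m1 - m2

/-- `L_d`, the saturation of `ℤλ₁ + ℤλ₂ + ℤv_d` in `Λ̃`. -/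
def LdSub (d : ℤ) : Submodule ℤ (Fin 24 → ℤ) :=
  sat (Submodule.span ℤ ({l1, l2, vdM d} : Set (Fin 24 → ℤ)))

section Aux

lemma mem_span3 {w x : Fin 24 → ℤ} :
    x ∈ Submodule.span ℤ ({l1, l2, w} : Set (Fin 24 → ℤ)) ↔
    ∃ a b c : ℤ, x = a • l1 + b • l2 + c • w := by
  simp only [Submodule.mem_span_insert, Submodule.mem_span_singleton]
  constructor
  · rintro ⟨a, _, ⟨b, _, ⟨c, rfl⟩, rfl⟩, rfl⟩
    exact ⟨a, b, c, by rw [add_assoc]⟩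
  · rintro ⟨a, b, c, rfl⟩
    exact ⟨a, _, ⟨b, _, ⟨c, rfl⟩, rfl⟩, by rw [add_assoc]⟩

lemma coord_eval (a b c : ℤ) (w : Fin 24 → ℤ) :
    (a • l1 + b • l2 + c • w) 16 = c * w 16 ∧
    (a • l1 + b • l2 + c • w) 20 = b + c * w 20 ∧
    (a • l1 + b • l2 + c • w) 22 = a + c * w 22 := by
  simp [l1, l2, Pi.single_apply]

end Aux

/-- For a positive integer `d`: if `d ≡ 0 (mod 6)` then `ℤλ₁ + ℤλ₂ + ℤv_d` is
saturated in `Λ̃`, i.e. equals `L_d`; if `d ≡ 2 (mod 6)` then it has index `3` in `L_d`, and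
in particular `(1/3)(v_d - λ₁ + λ₂) ∈ Λ̃`. -/
theorem stmt_19 (d : ℤ) (hd : 0 < d) :
    (d % 6 = 0 →
      LdSub d = Submodule.span ℤ ({l1, l2, vdM d} : Set (Fin 24 → ℤ))) ∧
    (d % 6 = 2 →
      ((Submodule.span ℤ ({l1, l2, vdM d} : Set (Fin 24 → ℤ))).toAddSubgroup.relIndex
        (LdSub d).toAddSubgroup = 3) ∧
      ∃ u : Fin 24 → ℤ, (3 : ℤ) • u = vdM d - l1 + l2) := by
  constructor
  · -- d ≡ 0 mod 6
    intro h6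
    apply le_antisymm
    · rintro x ⟨n, hn, hx⟩
      have hv : vdM d = Pi.single 16 1 - (d / 6) • Pi.single 17 1 := by
        simp [vdM, h6]
      rw [mem_span3] at hx
      obtain ⟨a, b, c, hx⟩ := hx
      have h16 : n * x 16 = c := by
        have := congrFun hx 16
        simpa [hv, l1, l2, Pi.single_apply] using this
      have h20 : n * x 20 = b := by
        have := congrFun hx 20
        simpa [hv, l1, l2, Pi.single_apply] using this
      have h22 : n * x 22 = a := by
        have := congrFun hx 22
        simpa [hv, l1, l2, Pi.single_apply] using this
      have key : n • x = n • ((x 22) • l1 + (x 20) • l2 + (x 16) • vdM d) := by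
        rw [hx, ← h16, ← h20, ← h22]
        module
      have := smul_right_injective (Fin 24 → ℤ) hn key
      rw [this, mem_span3]
      exact ⟨x 22, x 20, x 16, rfl⟩
    · rintro x hx
      exact ⟨1, one_ne_zero, by simpa using hx⟩
  · -- d ≡ 2 mod 6
    intro h6
    have h6' : ¬ d % 6 = 0 := by omega
    set k : ℤ := (d - 2) / 6 with hk
    have hv : vdM d = (3 : ℤ) • (Pi.single 16 1 - k • Pi.single 17 1) + m1 - m2 := by
      simp [vdM, h6', hk]
    set u : Fin 24 → ℤ :=
      Pi.single 16 1 - k • Pi.single 17 1 + Pi.single 20 1 + Pi.single 23 1 with hu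
    have hvu : vdM d = (3 : ℤ) • u + l1 - l2 := by
      rw [hv, hu]
      funext j
      fin_cases j <;> simp [l1, l2, m1, m2, Pi.single_apply] <;> ring
    have h3u : (3 : ℤ) • u = vdM d - l1 + l2 := by rw [hvu]; abel
    refine ⟨?_, u, h3u⟩
    -- characterize membership in LdSub d
    have memK : ∀ x : Fin 24 → ℤ, x ∈ LdSub d ↔
        ∃ a b c : ℤ, x = a • l1 + b • l2 + c • u := by
      intro x
      constructor
      · rintro ⟨n, hn, hx⟩
        rw [mem_span3] at hx
        obtain ⟨a, b, c, hx⟩ := hx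
        have hx' : n • x = (a + c) • l1 + (b - c) • l2 + (3 * c) • u := by
          rw [hx, hvu]; module
        have hu16 : u 16 = 1 := by simp [hu, Pi.single_apply]
        have hu20 : u 20 = 1 := by simp [hu, Pi.single_apply]
        have hu22 : u 22 = 0 := by simp [hu, Pi.single_apply]
        have h16 : n * x 16 = 3 * c := by
          have := congrFun hx' 16
          simpa [l1, l2, hu16, Pi.single_apply, (coord_eval (a+c) (b-c) (3*c) u).1] using this
        have h20 : n * x 20 = (b - c) + 3 * c := by
          have := congrFun hx' 20
          simpa [l1, l2, hu20, Pi.single_apply, (coord_eval (a+c) (b-c) (3*c) u).2.1] using this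
        have h22 : n * x 22 = a + c := by
          have := congrFun hx' 22
          simpa [l1, l2, hu22, Pi.single_apply, (coord_eval (a+c) (b-c) (3*c) u).2.2] using this
        have key : n • x = n • ((x 22) • l1 + (x 20 - x 16) • l2 + (x 16) • u) := by
          rw [hx']
          have e1 : n * (x 20 - x 16) = b - c + 3 * c - (3 * c) := by
            rw [mul_sub, h20, h16]
          have e2 : b - c + 3 * c - (3*c) = b - c := by ring
          rw [e2] at e1
          rw [← h16, ← h22, ← e1]
          module
        have := smul_right_injective (Fin 24 → ℤ) hn key
        exact ⟨x 22, x 20 - x 16, x 16, this⟩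
      · rintro ⟨a, b, c, rfl⟩
        refine ⟨3, by norm_num, ?_⟩
        rw [mem_span3]
        refine ⟨3 * a - c, 3 * b + c, c, ?_⟩
        rw [hvu]; module
    -- membership in span iff 3 ∣ x 16, for x ∈ LdSub d
    have memN : ∀ x : Fin 24 → ℤ, x ∈ LdSub d →
        (x ∈ Submodule.span ℤ ({l1, l2, vdM d} : Set (Fin 24 → ℤ)) ↔ (3 : ℤ) ∣ x 16) := by
      intro x hxK
      constructor
      · rw [mem_span3]
        rintro ⟨a, b, c, rfl⟩
        have : (a • l1 + b • l2 + c • vdM d) 16 = 3 * c := by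
          have hv16 : vdM d 16 = 3 := by
            rw [hvu]; simp [l1, l2, hu, Pi.single_apply]
          rw [(coord_eval a b c (vdM d)).1, hv16]; ring
        rw [this]
        exact ⟨c, rfl⟩
      · intro hdvd
        obtain ⟨a, b, c, hx⟩ := (memK x).1 hxK
        have hc : c = x 16 := by
          have := congrFun hx 16
          have hu16 : u 16 = 1 := by simp [hu, Pi.single_apply]
          rw [(coord_eval a b c u).1, hu16, mul_one] at this
          omega
        obtain ⟨c', hc'⟩ := hdvd
        rw [mem_span3]
        refine ⟨a - c', b + c', c', ?_⟩
        rw [hx, hc, hc']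
        rw [hvu]; module
    -- the homomorphism to ZMod 3
    set K := (LdSub d).toAddSubgroup with hK
    set N := (Submodule.span ℤ ({l1, l2, vdM d} : Set (Fin 24 → ℤ))).toAddSubgroup with hN
    set f : K →+ ZMod 3 :=
      (Int.castAddHom (ZMod 3)).comp ((Pi.evalAddMonoidHom (fun _ : Fin 24 => ℤ) 16).comp
        K.subtype) with hf
    have hker : f.ker = N.addSubgroupOf K := by
      ext ⟨x, hx⟩
      simp only [AddMonoidHom.mem_ker, hf, AddMonoidHom.coe_comp, Function.comp_apply,
        AddSubgroup.coe_subtype, Pi.evalAddMonoidHom_apply, Int.coe_castAddHom,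
        AddSubgroup.mem_addSubgroupOf]
      rw [ZMod.intCast_zmod_eq_zero_iff_dvd]
      have : ((3:ℕ):ℤ) = (3:ℤ) := by norm_num
      rw [this]
      exact (memN x hx).symm
    have hrange : f.range = ⊤ := by
      rw [AddSubgroup.eq_top_iff']
      intro y
      obtain ⟨m, rfl⟩ := ZMod.intCast_surjective (n := 3) y
      have huK : u ∈ LdSub d := (memK u).2 ⟨0, 0, 1, by module⟩
      refine ⟨⟨m • u, Submodule.smul_mem _ m huK⟩, ?_⟩
      have hu16 : u 16 = 1 := by simp [hu, Pi.single_apply]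
      simp [hf, hu16]
    have : N.relIndex K = f.ker.index := by rw [hker]; rfl
    rw [this, AddSubgroup.index_ker, hrange]
    have h2 : Nat.card (⊤ : AddSubgroup (ZMod 3)) = Nat.card (ZMod 3) :=
      Nat.card_congr AddSubgroup.topEquiv.toEquiv
    rw [h2, Nat.card_eq_fintype_card, ZMod.card]
end
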